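/- The Shiryaev-Roberts e-detector built from e_j-processes is an e-detector: if for each j ≥ 1, Λ^(j) is a nonnegative adapted process with Λ^(j)_n = 1 for n < j and E[Λ^(j)_τ | F_{j-1}] ≤ 1 for all stopping times τ, then the process M^SR_n := Σ_{j=1}^n Λ^(j)_n satisfies E[M^SR_τ] ≤ E[τ] for every stopping time τ. -/

import Mathlib

open MeasureTheory Filter
open scoped ENNReal

noncomputable section

/-- A stopping time (possibly infinite, valued in `ℕ∞`) with respect to a filtration. -/
def IsStoppingTimeENat {Ω : Type*} {m0 : MeasurableSpace Ω}
    (𝒢 : Filtration ℕ m0) (τ : Ω → ℕ∞) : Prop :=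
  ∀ n : ℕ, MeasurableSet[𝒢 n] {ω | τ ω ≤ (n : ℕ∞)}

/-- The value of a process at a stopping time, with `limsup` at infinity. -/
def stoppedVal {Ω : Type*} (M : ℕ → Ω → ℝ≥0∞) (τ : Ω → ℕ∞) (ω : Ω) : ℝ≥0∞ :=
  if τ ω = ⊤ then limsup (fun n => M n ω) atTop else M (τ ω).toNat ω

/-- An e-detector: a nonnegative adapted process with `E[M_τ] ≤ E[τ]` for all stopping times. -/
def IsEDetector {Ω : Type*} {m0 : MeasurableSpace Ω}
    (𝒢 : Filtration ℕ m0) (μ : Measure Ω) (M : ℕ → Ω → ℝ≥0∞) : Prop :=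
  (∀ n, Measurable[𝒢 n] (M n)) ∧
  ∀ τ : Ω → ℕ∞, IsStoppingTimeENat 𝒢 τ →
    ∫⁻ ω, stoppedVal M τ ω ∂μ ≤ ∫⁻ ω, (τ ω : ℝ≥0∞) ∂μ

section Aux

variable {Ω : Type*} {m0 : MeasurableSpace Ω}

lemma enat_lt_add_one (m : ℕ) : (m : ℕ∞) < (m : ℕ∞) + 1 := by
  exact_mod_cast Nat.lt_succ_self m

lemma measurable_limsup_aux {f : ℕ → Ω → ℝ≥0∞} (hf : ∀ n, Measurable (f n)) :
    Measurable fun ω => limsup (fun n => f n ω) atTop := by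
  have : (fun ω => limsup (fun n => f n ω) atTop)
      = fun ω => ⨅ n, ⨆ i, ⨆ _ : n ≤ i, f i ω := by
    funext ω; exact limsup_eq_iInf_iSup_of_nat
  rw [this]
  exact Measurable.iInf fun n => Measurable.iSup fun i => Measurable.iSup fun _ => hf i

lemma measurable_stoppedVal_aux {f : ℕ → Ω → ℝ≥0∞} (hf : ∀ n, Measurable (f n))
    {τ : Ω → ℕ∞} (hτ : ∀ n : ℕ, MeasurableSet {ω | τ ω ≤ (n : ℕ∞)}) :
    Measurable (stoppedVal f τ) := by
  have hEq : ∀ n : ℕ, MeasurableSet {ω | τ ω = (n : ℕ∞)} := by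
    intro n
    match n with
    | 0 =>
      have h0 : {ω | τ ω = ((0 : ℕ) : ℕ∞)} = {ω | τ ω ≤ ((0 : ℕ) : ℕ∞)} := by
        ext ω; simp [nonpos_iff_eq_zero]
      rw [h0]; exact hτ 0
    | Nat.succ m =>
      have : {ω | τ ω = ((m + 1 : ℕ) : ℕ∞)}
          = {ω | τ ω ≤ ((m + 1 : ℕ) : ℕ∞)} \ {ω | τ ω ≤ (m : ℕ∞)} := by
        ext ω
        simp only [Set.mem_setOf_eq, Set.mem_diff]
        constructor
        · rintro h; rw [h]
          exact ⟨le_refl _, fun hc => Nat.not_succ_le_self m (by exact_mod_cast hc)⟩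
        · rintro ⟨h1, h2⟩
          have : (m : ℕ∞) < τ ω := lt_of_not_ge h2
          have h3 : ((m + 1 : ℕ) : ℕ∞) ≤ τ ω := by
            push_cast
            exact Order.add_one_le_of_lt this
          exact le_antisymm h1 h3
      rw [this]; exact (hτ (m + 1)).diff (hτ m)
  have hTop : MeasurableSet {ω | τ ω = ⊤} := by
    have : {ω | τ ω = ⊤} = (⋃ n : ℕ, {ω | τ ω ≤ (n : ℕ∞)})ᶜ := by
      ext ω
      simp only [Set.mem_compl_iff, Set.mem_iUnion, Set.mem_setOf_eq, not_exists]
      constructor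
      · intro h n; rw [h]; simp
      · intro h
        by_contra hne
        obtain ⟨m, hm⟩ := WithTop.ne_top_iff_exists.mp hne
        exact h m hm.ge
    rw [this]
    exact (MeasurableSet.iUnion fun n => hτ n).compl
  have key : stoppedVal f τ = fun ω =>
      (∑' n : ℕ, ({ω | τ ω = (n : ℕ∞)}).indicator (f n) ω)
        + ({ω | τ ω = ⊤}).indicator (fun ω => limsup (fun n => f n ω) atTop) ω := by
    funext ω
    rcases eq_or_ne (τ ω) ⊤ with h | h
    · have hs : ∀ n : ℕ, ({ω | τ ω = (n : ℕ∞)}).indicator (f n) ω = 0 := by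
        intro n
        apply Set.indicator_of_notMem
        simp only [Set.mem_setOf_eq, h]
        exact fun hc => (by simp at hc)
      simp [stoppedVal, h, hs, Set.indicator_of_mem, Set.mem_setOf_eq]
    · obtain ⟨m, hm⟩ := WithTop.ne_top_iff_exists.mp h
      have hm' : τ ω = (m : ℕ∞) := hm.symm
      have hsum : (∑' n : ℕ, ({ω | τ ω = (n : ℕ∞)}).indicator (f n) ω) = f m ω := by
        rw [tsum_eq_single m]
        · rw [Set.indicator_of_mem]; exact hm'
        · intro n hn
          apply Set.indicator_of_notMem
          simp only [Set.mem_setOf_eq, hm']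
          exact fun hc => hn (by exact_mod_cast hc.symm)
      have hind : ({ω | τ ω = ⊤}).indicator
          (fun ω => limsup (fun n => f n ω) atTop) ω = 0 :=
        Set.indicator_of_notMem (by simp [Set.mem_setOf_eq, h]) _
      simp [stoppedVal, h, hsum, hind, hm']
  rw [key]
  exact (Measurable.ennreal_tsum fun n => (hf n).indicator (hEq n)).add
    ((measurable_limsup_aux hf).indicator hTop)

end Aux

/-- The Shiryaev–Roberts e-detector built from e_j-processes is an e-detector. -/
theorem stmt3 {Ω : Type*} {m0 : MeasurableSpace Ω} (μ : Measure Ω) [IsProbabilityMeasure μ]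
    (𝒢 : Filtration ℕ m0) (Λ : ℕ → ℕ → Ω → ℝ≥0∞)
    (hadapt : ∀ j n, Measurable[𝒢 n] (Λ j n))
    (hinit : ∀ j n, n < j → ∀ ω, Λ j n ω = 1)
    (hej : ∀ j, 1 ≤ j → ∀ τ : Ω → ℕ∞, IsStoppingTimeENat 𝒢 τ →
      ∀ A : Set Ω, MeasurableSet[𝒢 (j - 1)] A →
        ∫⁻ ω in A, stoppedVal (Λ j) τ ω ∂μ ≤ μ A) :
    ∀ τ : Ω → ℕ∞, IsStoppingTimeENat 𝒢 τ →
      ∫⁻ ω, stoppedVal (fun n ω => ∑ j ∈ Finset.Icc 1 n, Λ j n ω) τ ω ∂μ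
        ≤ ∫⁻ ω, (τ ω : ℝ≥0∞) ∂μ := by
  intro τ hτ
  -- the sets A_j = {τ ≥ j+1}
  set A : ℕ → Set Ω := fun j => {ω | ((j : ℕ∞) + 1) ≤ τ ω} with hA
  have hAj : ∀ j : ℕ, MeasurableSet[𝒢 j] (A j) := by
    intro j
    have : A j = {ω | τ ω ≤ (j : ℕ∞)}ᶜ := by
      ext ω
      simp only [hA, Set.mem_setOf_eq, Set.mem_compl_iff]
      constructor
      · intro h hc
        exact absurd (h.trans hc) (not_le.mpr (enat_lt_add_one j))
      · intro h
        exact Order.add_one_le_of_lt (lt_of_not_ge h)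
    rw [this]
    exact (hτ j).compl
  have hAmeas : ∀ j : ℕ, MeasurableSet (A j) := fun j => (𝒢.le j) _ (hAj j)
  have hΛmeas : ∀ j n, Measurable (Λ j n) := fun j n => (hadapt j n).mono (𝒢.le n) le_rfl
  have hSVmeas : ∀ j : ℕ, Measurable (stoppedVal (Λ j) τ) := fun j =>
    measurable_stoppedVal_aux (hΛmeas j) (fun n => (𝒢.le n) _ (hτ n))
  -- RHS equals the sum of measures of A j
  have hRHS : ∫⁻ ω, (τ ω : ℝ≥0∞) ∂μ = ∑' j : ℕ, μ (A j) := by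
    have hpt : ∀ ω, (τ ω : ℝ≥0∞) = ∑' j : ℕ, (A j).indicator (fun _ => (1 : ℝ≥0∞)) ω := by
      intro ω
      rcases eq_or_ne (τ ω) ⊤ with h | h
      · have : ∀ j : ℕ, (A j).indicator (fun _ => (1 : ℝ≥0∞)) ω = 1 := by
          intro j
          apply Set.indicator_of_mem
          simp [hA, Set.mem_setOf_eq, h]
        rw [h]
        simp only [this]
        rw [ENNReal.tsum_const_eq_top_of_ne_zero one_ne_zero]
        simp
      · obtain ⟨m, hm⟩ := WithTop.ne_top_iff_exists.mp h
        have hm' : τ ω = (m : ℕ∞) := hm.symm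
        have : ∀ j : ℕ, (A j).indicator (fun _ => (1 : ℝ≥0∞)) ω
            = if j < m then 1 else 0 := by
          intro j
          by_cases hj : j < m
          · rw [if_pos hj]
            apply Set.indicator_of_mem
            simp only [hA, Set.mem_setOf_eq, hm']
            exact_mod_cast Order.add_one_le_of_lt (by exact_mod_cast hj)
          · rw [if_neg hj]
            apply Set.indicator_of_notMem
            simp only [hA, Set.mem_setOf_eq, hm']
            intro hc
            have : (j : ℕ∞) < (m : ℕ∞) := lt_of_lt_of_le (enat_lt_add_one j) hc
            exact hj (by exact_mod_cast this)
        rw [hm']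
        simp only [this]
        rw [tsum_eq_sum (s := Finset.range m) (by
          intro j hj
          rw [if_neg]
          simpa using hj)]
        rw [Finset.sum_ite_of_true (by intro j hj; simpa using hj)]
        simp
    calc ∫⁻ ω, (τ ω : ℝ≥0∞) ∂μ
        = ∫⁻ ω, ∑' j : ℕ, (A j).indicator (fun _ => (1 : ℝ≥0∞)) ω ∂μ := by
          exact lintegral_congr fun ω => hpt ω
      _ = ∑' j : ℕ, ∫⁻ ω, (A j).indicator (fun _ => (1 : ℝ≥0∞)) ω ∂μ :=
          lintegral_tsum fun j =>
            ((measurable_const.indicator (hAmeas j)).aemeasurable)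
      _ = ∑' j : ℕ, μ (A j) := by
          congr 1
          funext j
          rw [lintegral_indicator (hAmeas j)]
          simp
  rw [hRHS]
  by_cases hfin : μ {ω | τ ω = ⊤} = 0
  · -- τ is a.e. finite
    have hae : ∀ᵐ ω ∂μ, τ ω ≠ ⊤ := by
      rw [ae_iff]
      convert hfin using 2
      ext ω; simp
    have hpt : ∀ ω, τ ω ≠ ⊤ →
        stoppedVal (fun n ω => ∑ j ∈ Finset.Icc 1 n, Λ j n ω) τ ω
          = ∑' j : ℕ, (A j).indicator (stoppedVal (Λ (j + 1)) τ) ω := by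
      intro ω h
      obtain ⟨m, hm⟩ := WithTop.ne_top_iff_exists.mp h
      have hm' : τ ω = (m : ℕ∞) := hm.symm
      have hval : ∀ j : ℕ, (A j).indicator (stoppedVal (Λ (j + 1)) τ) ω
          = if j < m then Λ (j + 1) m ω else 0 := by
        intro j
        by_cases hj : j < m
        · rw [if_pos hj]
          rw [Set.indicator_of_mem]
          · simp [stoppedVal, hm']
          · simp only [hA, Set.mem_setOf_eq, hm']
            exact_mod_cast Order.add_one_le_of_lt (by exact_mod_cast hj)
        · rw [if_neg hj]
          apply Set.indicator_of_notMem
          simp only [hA, Set.mem_setOf_eq, hm']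
          intro hc
          have : (j : ℕ∞) < (m : ℕ∞) := lt_of_lt_of_le (enat_lt_add_one j) hc
          exact hj (by exact_mod_cast this)
      rw [show stoppedVal (fun n ω => ∑ j ∈ Finset.Icc 1 n, Λ j n ω) τ ω
          = ∑ j ∈ Finset.Icc 1 m, Λ j m ω by simp [stoppedVal, hm']]
      simp only [hval]
      rw [tsum_eq_sum (s := Finset.range m) (by
        intro j hj
        rw [if_neg]; simpa using hj)]
      rw [Finset.sum_ite_of_true (by intro j hj; simpa using hj)]
      rw [← Finset.Ico_add_one_right_eq_Icc, Finset.sum_Ico_eq_sum_range]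
      simp [add_comm]
    calc ∫⁻ ω, stoppedVal (fun n ω => ∑ j ∈ Finset.Icc 1 n, Λ j n ω) τ ω ∂μ
        = ∫⁻ ω, ∑' j : ℕ, (A j).indicator (stoppedVal (Λ (j + 1)) τ) ω ∂μ := by
          apply lintegral_congr_ae
          filter_upwards [hae] with ω h
          exact hpt ω h
      _ = ∑' j : ℕ, ∫⁻ ω, (A j).indicator (stoppedVal (Λ (j + 1)) τ) ω ∂μ :=
          lintegral_tsum fun j =>
            (((hSVmeas (j + 1)).indicator (hAmeas j)).aemeasurable)
      _ = ∑' j : ℕ, ∫⁻ ω in A j, stoppedVal (Λ (j + 1)) τ ω ∂μ := by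
          congr 1
          funext j
          rw [lintegral_indicator (hAmeas j)]
      _ ≤ ∑' j : ℕ, μ (A j) := by
          apply ENNReal.tsum_le_tsum
          intro j
          have := hej (j + 1) (Nat.le_add_left 1 j) τ hτ (A j)
            (by simpa using hAj j)
          exact this
  · -- τ = ⊤ with positive probability: RHS is infinite
    have hTopMeas : MeasurableSet {ω | τ ω = ⊤} := by
      have : {ω | τ ω = ⊤} = (⋃ n : ℕ, {ω | τ ω ≤ (n : ℕ∞)})ᶜ := by
        ext ω
        simp only [Set.mem_compl_iff, Set.mem_iUnion, Set.mem_setOf_eq, not_exists]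
        constructor
        · intro h n; rw [h]; simp
        · intro h
          by_contra hne
          obtain ⟨m, hm⟩ := WithTop.ne_top_iff_exists.mp hne
          exact h m hm.ge
      rw [this]
      exact (MeasurableSet.iUnion fun n => (𝒢.le n) _ (hτ n)).compl
    have : (∞ : ℝ≥0∞) ≤ ∑' j : ℕ, μ (A j) := by
      have hsub : ∀ j : ℕ, {ω | τ ω = ⊤} ⊆ A j := by
        intro j ω hω
        have hω' : τ ω = ⊤ := hω
        simp only [hA, Set.mem_setOf_eq, hω']
        exact le_top
      calc (∞ : ℝ≥0∞) = ∑' _ : ℕ, μ {ω | τ ω = ⊤} := by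
            rw [ENNReal.tsum_const_eq_top_of_ne_zero hfin]
        _ ≤ ∑' j : ℕ, μ (A j) :=
            ENNReal.tsum_le_tsum fun j => measure_mono (hsub j)
    exact le_trans le_top this
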